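/- arXiv:1011.4609 — 2 statements merged into one kernel-verified Lean document; each statement's English description precedes it below -/
import Mathlib

section
/- For a uniformly random σ-ary string s of length n, the expected k-th order empirical entropy satisfies E[H_k(s)] ≤ (C(n,2)/σ^k) · log₂ σ, hence E[H_k(s)] < (n²/σ^k) · log₂ σ. -/
open scoped Classical
open Finset Real Filter

noncomputable section

/-- Zeroth-order empirical entropy of a multiset of characters (base-2 bits per character). -/
def H0M {A : Type*} [Fintype A] (t : Multiset A) : ℝ :=
  (1 / (Multiset.card t : ℝ)) *
    ∑ a : A, (t.count a : ℝ) * Real.logb 2 ((Multiset.card t : ℝ) / (t.count a : ℝ))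

/-- Zeroth-order empirical entropy of a string `s` of length `n`. -/
def H0F {A : Type*} [Fintype A] {n : ℕ} (s : Fin n → A) : ℝ :=
  H0M (Multiset.map s Finset.univ.val)

/-- The context string `s_α`: the multiset of characters immediately following
occurrences of the `k`-tuple `α` in `s`. -/
def ctxF {A : Type*} [Fintype A] {n : ℕ} (k : ℕ) (s : Fin n → A) (α : Fin k → A) : Multiset A :=
  Multiset.map (fun i : Fin n => s ⟨min ((i : ℕ) + k) (n - 1), by have := i.isLt; omega⟩)
    ((Finset.univ.filter (fun i : Fin n =>
      (i : ℕ) + k < n ∧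
        ∀ t : Fin k, s ⟨min ((i : ℕ) + (t : ℕ)) (n - 1), by have := i.isLt; omega⟩ = α t)).val)

/-- `k`-th order empirical entropy of a string `s` of length `n`. -/
def HkF {A : Type*} [Fintype A] {n : ℕ} (k : ℕ) (s : Fin n → A) : ℝ :=
  (1 / (n : ℝ)) * ∑ α : Fin k → A, (Multiset.card (ctxF k s α) : ℝ) * H0M (ctxF k s α)

/-- The `k`-tuples of `s` starting at positions `i` and `j` both fit in `s` and coincide. -/
def MatchAt {A : Type*} {n : ℕ} (s : Fin n → A) (k i j : ℕ) : Prop :=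
  i + k ≤ n ∧ j + k ≤ n ∧
    ∀ t, t < k → ∀ (hi : i + t < n) (hj : j + t < n), s ⟨i + t, hi⟩ = s ⟨j + t, hj⟩

/-- `s` contains two matching `k`-tuples. -/
def HasMatch {A : Type*} {n : ℕ} (k : ℕ) (s : Fin n → A) : Prop :=
  ∃ i j : ℕ, i < j ∧ MatchAt s k i j

/-! ### Auxiliary lemmas -/

lemma H0M_of_card_le_one {A : Type*} [Fintype A] {t : Multiset A} (h : Multiset.card t ≤ 1) :
    H0M t = 0 := by
  unfold H0M
  rcases Nat.le_one_iff_eq_zero_or_eq_one.mp h with h0 | h1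
  · rw [h0]; simp
  · rw [h1]
    have : ∀ a : A, (t.count a : ℝ) * Real.logb 2 ((1 : ℝ) / (t.count a : ℝ)) = 0 := by
      intro a
      have hc : t.count a ≤ 1 := h1 ▸ Multiset.count_le_card a t
      interval_cases hh : t.count a <;> simp [hh]
    simp only [Nat.cast_one, this]
    simp

lemma H0M_le {A : Type*} [Fintype A] {t : Multiset A} (ht : 0 < Multiset.card t) :
    H0M t ≤ Real.logb 2 (Fintype.card A) := by
  set N : ℝ := (Multiset.card t : ℝ) with hN
  have hN0 : (0:ℝ) < N := by rw [hN]; exact_mod_cast ht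
  have hsum : ∑ a : A, (t.count a : ℝ) * Real.logb 2 (N / (t.count a : ℝ))
      = ∑ a ∈ t.toFinset, (t.count a : ℝ) * Real.logb 2 (N / (t.count a : ℝ)) := by
    refine (Finset.sum_subset (Finset.subset_univ _) ?_).symm
    intro a _ ha
    rw [Multiset.mem_toFinset] at ha
    have : t.count a = 0 := Multiset.count_eq_zero.mpr ha
    simp [this]
  have hw1 : ∑ a ∈ t.toFinset, (t.count a : ℝ) / N = 1 := by
    rw [← Finset.sum_div]
    rw [div_eq_one_iff_eq (ne_of_gt hN0)]
    rw [hN]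
    exact_mod_cast Multiset.toFinset_sum_count_eq t
  have hcount : ∀ a ∈ t.toFinset, (0:ℝ) < (t.count a : ℝ) := by
    intro a ha
    rw [Multiset.mem_toFinset] at ha
    exact_mod_cast (Multiset.count_pos).mpr ha
  have jensen : ∑ a ∈ t.toFinset, ((t.count a : ℝ) / N) • Real.log (N / (t.count a : ℝ))
      ≤ Real.log (∑ a ∈ t.toFinset, ((t.count a : ℝ) / N) • (N / (t.count a : ℝ))) := by
    refine ConcaveOn.le_map_sum strictConcaveOn_log_Ioi.concaveOn ?_ hw1 ?_
    · intro a ha; positivity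
    · intro a ha
      exact Set.mem_Ioi.mpr (div_pos hN0 (hcount a ha))
  have hx : ∑ a ∈ t.toFinset, ((t.count a : ℝ) / N) • (N / (t.count a : ℝ))
      = (t.toFinset.card : ℝ) := by
    rw [Finset.card_eq_sum_ones, Nat.cast_sum]
    refine Finset.sum_congr rfl ?_
    intro a ha
    have h1 := hcount a ha
    rw [smul_eq_mul, Nat.cast_one]
    field_simp
  have hcard : (0:ℝ) < (t.toFinset.card : ℝ) := by
    have : t.toFinset.Nonempty :=
      Multiset.toFinset_nonempty.mpr (Multiset.card_pos.mp ht)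
    exact_mod_cast Finset.card_pos.mpr this
  have hcardle : (t.toFinset.card : ℝ) ≤ (Fintype.card A : ℝ) := by
    exact_mod_cast Finset.card_le_card (Finset.subset_univ _)
  have hlog2 : (0:ℝ) < Real.log 2 := Real.log_pos (by norm_num)
  unfold H0M
  rw [← hN, hsum]
  have key : ∑ a ∈ t.toFinset, (t.count a : ℝ) * Real.logb 2 (N / (t.count a : ℝ))
      ≤ N * Real.logb 2 (Fintype.card A) := by
    have : ∑ a ∈ t.toFinset, (t.count a : ℝ) * Real.logb 2 (N / (t.count a : ℝ))
        = N * ((1 / Real.log 2) * ∑ a ∈ t.toFinset, ((t.count a : ℝ) / N) • Real.log (N / (t.count a : ℝ))) := by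
      rw [Finset.mul_sum, Finset.mul_sum]
      refine Finset.sum_congr rfl ?_
      intro a ha
      rw [Real.logb, smul_eq_mul]
      field_simp
    rw [this]
    have h2 : (1 / Real.log 2) * ∑ a ∈ t.toFinset, ((t.count a : ℝ) / N) • Real.log (N / (t.count a : ℝ))
        ≤ (1 / Real.log 2) * Real.log (Fintype.card A) := by
      refine mul_le_mul_of_nonneg_left ?_ (by positivity)
      refine jensen.trans ?_
      rw [hx]
      exact Real.log_le_log hcard hcardle
    have : (1 / Real.log 2) * Real.log (Fintype.card A) = Real.logb 2 (Fintype.card A) := by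
      rw [Real.logb]; ring
    rw [this] at h2
    exact mul_le_mul_of_nonneg_left h2 (le_of_lt hN0)
  calc (1 / N) * ∑ a ∈ t.toFinset, (t.count a : ℝ) * Real.logb 2 (N / (t.count a : ℝ))
      ≤ (1 / N) * (N * Real.logb 2 (Fintype.card A)) := by
        exact mul_le_mul_of_nonneg_left key (by positivity)
    _ = Real.logb 2 (Fintype.card A) := by field_simp

/-- The filter defining the context. -/
def ctxSet {A : Type*} [Fintype A] {n : ℕ} (k : ℕ) (s : Fin n → A) (α : Fin k → A) :
    Finset (Fin n) :=
  Finset.univ.filter (fun i : Fin n =>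
      (i : ℕ) + k < n ∧
        ∀ t : Fin k, s ⟨min ((i : ℕ) + (t : ℕ)) (n - 1), by have := i.isLt; omega⟩ = α t)

lemma card_ctxF {A : Type*} [Fintype A] {n : ℕ} (k : ℕ) (s : Fin n → A) (α : Fin k → A) :
    Multiset.card (ctxF k s α) = (ctxSet k s α).card := by
  rw [ctxF, Multiset.card_map]; rfl

lemma sum_card_ctxSet_le {A : Type*} [Fintype A] {n : ℕ} (k : ℕ) (s : Fin n → A) :
    ∑ α : Fin k → A, (ctxSet k s α).card ≤ n := by
  have h : ∀ α : Fin k → A, (ctxSet k s α).card =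
      ∑ i : Fin n, if i ∈ ctxSet k s α then 1 else 0 := by
    intro α
    rw [Finset.sum_ite_mem, Finset.univ_inter, Finset.sum_const, smul_eq_mul, mul_one]
  simp only [h]
  rw [Finset.sum_comm]
  have : ∀ i : Fin n, (∑ α : Fin k → A, if i ∈ ctxSet k s α then 1 else 0) ≤ 1 := by
    intro i
    have : (∑ α : Fin k → A, if i ∈ ctxSet k s α then 1 else 0)
        = (Finset.univ.filter (fun α : Fin k → A => i ∈ ctxSet k s α)).card := by
      rw [Finset.card_eq_sum_ones, Finset.sum_filter]
    rw [this]
    refine Finset.card_le_one.mpr ?_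
    intro a ha b hb
    rw [Finset.mem_filter] at ha hb
    have ha' := (Finset.mem_filter.mp ha.2).2
    have hb' := (Finset.mem_filter.mp hb.2).2
    funext t
    rw [← ha'.2 t, hb'.2 t]
  calc ∑ i : Fin n, ∑ α : Fin k → A, (if i ∈ ctxSet k s α then 1 else 0)
      ≤ ∑ _i : Fin n, 1 := Finset.sum_le_sum (fun i _ => this i)
    _ = n := by simp

lemma HkF_le {A : Type*} [Fintype A] {n : ℕ} (k : ℕ) (s : Fin n → A) (hn : 0 < n)
    (hA : 1 ≤ Fintype.card A) :
    HkF k s ≤ Real.logb 2 (Fintype.card A) := by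
  have hlogb : (0:ℝ) ≤ Real.logb 2 (Fintype.card A) := by
    refine Real.logb_nonneg (by norm_num) (by exact_mod_cast hA)
  have hterm : ∀ α : Fin k → A,
      (Multiset.card (ctxF k s α) : ℝ) * H0M (ctxF k s α)
        ≤ (Multiset.card (ctxF k s α) : ℝ) * Real.logb 2 (Fintype.card A) := by
    intro α
    rcases Nat.eq_zero_or_pos (Multiset.card (ctxF k s α)) with h0 | hpos
    · rw [h0]; simp
    · exact mul_le_mul_of_nonneg_left (H0M_le hpos) (by positivity)
  have hsum : ∑ α : Fin k → A, (Multiset.card (ctxF k s α) : ℝ) * H0M (ctxF k s α)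
      ≤ (n : ℝ) * Real.logb 2 (Fintype.card A) := by
    calc ∑ α : Fin k → A, (Multiset.card (ctxF k s α) : ℝ) * H0M (ctxF k s α)
        ≤ ∑ α : Fin k → A, (Multiset.card (ctxF k s α) : ℝ) * Real.logb 2 (Fintype.card A) :=
          Finset.sum_le_sum (fun α _ => hterm α)
      _ = (∑ α : Fin k → A, (Multiset.card (ctxF k s α) : ℝ)) * Real.logb 2 (Fintype.card A) := by
          rw [Finset.sum_mul]
      _ ≤ (n : ℝ) * Real.logb 2 (Fintype.card A) := by
          refine mul_le_mul_of_nonneg_right ?_ hlogb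
          have : ∑ α : Fin k → A, (Multiset.card (ctxF k s α) : ℝ)
              = ((∑ α : Fin k → A, (ctxSet k s α).card : ℕ) : ℝ) := by
            rw [Nat.cast_sum]
            exact Finset.sum_congr rfl (fun α _ => by rw [card_ctxF])
          rw [this]
          exact_mod_cast sum_card_ctxSet_le k s
  unfold HkF
  have hn' : (0:ℝ) < (n:ℝ) := by exact_mod_cast hn
  calc (1 / (n : ℝ)) * ∑ α : Fin k → A, (Multiset.card (ctxF k s α) : ℝ) * H0M (ctxF k s α)
      ≤ (1 / (n : ℝ)) * ((n : ℝ) * Real.logb 2 (Fintype.card A)) :=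
        mul_le_mul_of_nonneg_left hsum (by positivity)
    _ = Real.logb 2 (Fintype.card A) := by field_simp

lemma HkF_eq_zero {A : Type*} [Fintype A] {n : ℕ} {k : ℕ} {s : Fin n → A}
    (h : ∀ α : Fin k → A, (ctxSet k s α).card ≤ 1) : HkF k s = 0 := by
  unfold HkF
  have : ∀ α : Fin k → A, (Multiset.card (ctxF k s α) : ℝ) * H0M (ctxF k s α) = 0 := by
    intro α
    have hc : Multiset.card (ctxF k s α) ≤ 1 := by rw [card_ctxF]; exact h α
    rw [H0M_of_card_le_one hc, mul_zero]
  rw [Finset.sum_congr rfl (fun α _ => this α), Finset.sum_const, smul_zero, mul_zero]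

lemma ctxSet_card_le_one_of_no_match {A : Type*} [Fintype A] {n : ℕ} {k : ℕ} {s : Fin n → A}
    (h : ¬ HasMatch k s) (α : Fin k → A) : (ctxSet k s α).card ≤ 1 := by
  by_contra hc
  push_neg at hc
  obtain ⟨a, ha, b, hb, hab⟩ := Finset.one_lt_card.mp hc
  wlog hlt : (a : ℕ) < (b : ℕ) generalizing a b
  · have hne : (a : ℕ) ≠ (b : ℕ) := fun hh => hab (Fin.ext hh)
    exact this b hb a ha (Ne.symm hab) (by omega)
  · apply h
    have ha' := (Finset.mem_filter.mp ha).2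
    have hb' := (Finset.mem_filter.mp hb).2
    refine ⟨a, b, hlt, le_of_lt ha'.1, le_of_lt hb'.1, ?_⟩
    intro t ht hi hj
    have h1 := ha'.2 ⟨t, ht⟩
    have h2 := hb'.2 ⟨t, ht⟩
    have hmin1 : min ((a : ℕ) + t) (n - 1) = (a : ℕ) + t := by omega
    have hmin2 : min ((b : ℕ) + t) (n - 1) = (b : ℕ) + t := by omega
    rw [show (⟨(a:ℕ) + t, hi⟩ : Fin n) = ⟨min ((a : ℕ) + t) (n-1), by omega⟩ from Fin.ext (by simp [hmin1]),
        show (⟨(b:ℕ) + t, hj⟩ : Fin n) = ⟨min ((b : ℕ) + t) (n-1), by omega⟩ from Fin.ext (by simp [hmin2])]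
    rw [h1, h2]

lemma matchAt_count {A : Type*} [Fintype A] {σ n : ℕ} (hσ : Fintype.card A = σ)
    {k i j : ℕ} (hij : i < j) (hjk : j + k ≤ n) :
    (Finset.univ.filter (fun s : Fin n → A => MatchAt s k i j)).card ≤ σ ^ (n - k) := by
  have hΦ : ∀ m : Fin (n - k), (if (m:ℕ) < j then (m:ℕ) else (m:ℕ) + k) < n := by
    intro m; have hm := m.isLt; split <;> omega
  set Φ : (Fin n → A) → (Fin (n - k) → A) :=
    fun s m => s ⟨if (m:ℕ) < j then (m:ℕ) else (m:ℕ) + k, hΦ m⟩ with hΦdef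
  have hinj : Set.InjOn Φ (Finset.univ.filter (fun s : Fin n → A => MatchAt s k i j)) := by
    intro s hs s' hs' heq
    rw [Finset.coe_filter] at hs hs'
    have hs1 : MatchAt s k i j := hs.2
    have hs2 : MatchAt s' k i j := hs'.2
    have key : ∀ v : ℕ, ∀ hv : v < n, s ⟨v, hv⟩ = s' ⟨v, hv⟩ := by
      intro v
      induction v using Nat.strong_induction_on with
      | _ v IH =>
        intro hv
        by_cases h1 : v < j
        · have hm : v < n - k := by omega
          have h := congrFun heq ⟨v, hm⟩
          simpa [hΦdef, h1] using h
        · by_cases h2 : j + k ≤ v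
          · have hm : v - k < n - k := by omega
            have h := congrFun heq ⟨v - k, hm⟩
            have hcond : ¬ ((v - k) < j) := by omega
            simp only [hΦdef, hcond, if_false] at h
            have he : (⟨v - k + k, by omega⟩ : Fin n) = ⟨v, hv⟩ :=
              Fin.ext (show v - k + k = v by omega)
            rwa [he] at h
          · have ht : v - j < k := by omega
            have hiv : i + (v - j) < n := by omega
            have hjv : j + (v - j) < n := by omega
            have e1 := hs1.2.2 (v - j) ht hiv hjv
            have e2 := hs2.2.2 (v - j) ht hiv hjv
            have hv' : (⟨j + (v - j), hjv⟩ : Fin n) = ⟨v, hv⟩ :=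
              Fin.ext (show j + (v - j) = v by omega)
            rw [← hv', ← e1, ← e2]
            exact IH (i + (v - j)) (by omega) hiv
    funext p
    have := key p.val p.isLt
    simpa using this
  calc (Finset.univ.filter (fun s : Fin n → A => MatchAt s k i j)).card
      ≤ (Finset.univ : Finset (Fin (n - k) → A)).card :=
        Finset.card_le_card_of_injOn Φ (fun _ _ => Finset.mem_univ _) hinj
    _ = σ ^ (n - k) := by rw [Finset.card_univ, Fintype.card_fun, Fintype.card_fin, hσ]

lemma card_pairs_le (n k : ℕ) :
    ((Finset.range n ×ˢ Finset.range n).filter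
      (fun p : ℕ × ℕ => p.1 < p.2 ∧ p.2 + k ≤ n)).card ≤ n.choose 2 := by
  have := Finset.card_le_card_of_injOn (fun p : ℕ × ℕ => ({p.1, p.2} : Finset ℕ))
    (s := (Finset.range n ×ˢ Finset.range n).filter
      (fun p : ℕ × ℕ => p.1 < p.2 ∧ p.2 + k ≤ n))
    (t := (Finset.range n).powersetCard 2) ?_ ?_
  · calc _ ≤ ((Finset.range n).powersetCard 2).card := this
      _ = n.choose 2 := by rw [Finset.card_powersetCard, Finset.card_range]
  · intro p hp
    rw [Finset.mem_coe, Finset.mem_filter, Finset.mem_product] at hp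
    rw [Finset.mem_coe, Finset.mem_powersetCard]
    constructor
    · intro x hx
      simp only [Finset.mem_insert, Finset.mem_singleton] at hx
      rcases hx with h | h <;> subst h
      · exact hp.1.1
      · exact hp.1.2
    · rw [Finset.card_insert_of_notMem (by simp; omega), Finset.card_singleton]
  · intro p hp q hq h
    rw [Finset.mem_coe, Finset.mem_filter] at hp hq
    have h' : ({p.1, p.2} : Finset ℕ) = ({q.1, q.2} : Finset ℕ) := h
    have h1 : q.1 ∈ ({p.1, p.2} : Finset ℕ) := by rw [h']; simp
    have h2 : q.2 ∈ ({p.1, p.2} : Finset ℕ) := by rw [h']; simp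
    have h3 : p.1 ∈ ({q.1, q.2} : Finset ℕ) := by rw [← h']; simp
    simp only [Finset.mem_insert, Finset.mem_singleton] at h1 h2 h3
    have hp' := hp.2.1
    have hq' := hq.2.1
    have : p.1 = q.1 ∧ p.2 = q.2 := by omega
    exact Prod.ext this.1 this.2

/-- For a uniformly random σ-ary string of length `n ≥ 1`, the expected `k`-th
order empirical entropy is at most `(C(n,2)/σ^k)·log₂ σ`, hence less than `(n²/σ^k)·log₂ σ`. -/
theorem expected_Hk_le {A : Type*} [Fintype A] {σ n k : ℕ}
    (hσ : Fintype.card A = σ) (hσ2 : 2 ≤ σ) (hn : 0 < n) :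
    (1 / (Fintype.card (Fin n → A) : ℝ)) * (∑ s : Fin n → A, HkF k s)
        ≤ ((n.choose 2 : ℝ) / (σ : ℝ) ^ k) * Real.logb 2 σ
    ∧ (1 / (Fintype.card (Fin n → A) : ℝ)) * (∑ s : Fin n → A, HkF k s)
        < ((n : ℝ) ^ 2 / (σ : ℝ) ^ k) * Real.logb 2 σ := by
  have hA1 : 1 ≤ Fintype.card A := by omega
  have hcardfun : Fintype.card (Fin n → A) = σ ^ n := by
    rw [Fintype.card_fun, Fintype.card_fin, hσ]
  have hσR : (1:ℝ) < (σ:ℝ) := by exact_mod_cast hσ2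
  have hlogpos : (0:ℝ) < Real.logb 2 σ := Real.logb_pos (by norm_num) hσR
  have hSpos : (0:ℝ) < (Fintype.card (Fin n → A) : ℝ) := by
    rw [hcardfun]; positivity
  have hpowk : (0:ℝ) < (σ:ℝ) ^ k := by positivity
  have main : (1 / (Fintype.card (Fin n → A) : ℝ)) * (∑ s : Fin n → A, HkF k s)
      ≤ ((n.choose 2 : ℝ) / (σ : ℝ) ^ k) * Real.logb 2 σ := by
    by_cases hn1 : n = 1
    · -- everything is zero
      subst hn1
      have hz : ∀ s : Fin 1 → A, HkF k s = 0 := by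
        intro s
        refine HkF_eq_zero (fun α => ?_)
        calc (ctxSet k s α).card ≤ (Finset.univ : Finset (Fin 1)).card :=
              Finset.card_le_card (Finset.subset_univ _)
          _ = 1 := by simp
      rw [Finset.sum_congr rfl (fun s _ => hz s), Finset.sum_const, smul_zero, mul_zero]
      exact mul_nonneg (div_nonneg (Nat.cast_nonneg _) hpowk.le) hlogpos.le
    · by_cases hk0 : k = 0
      · -- trivial bound by log σ, using C(n,2) ≥ 1 for n ≥ 2
        subst hk0
        have hn2 : 2 ≤ n := by omega
        have hE : (1 / (Fintype.card (Fin n → A) : ℝ)) * (∑ s : Fin n → A, HkF 0 s)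
            ≤ Real.logb 2 σ := by
          have hsum : ∑ s : Fin n → A, HkF 0 s
              ≤ (Fintype.card (Fin n → A) : ℝ) * Real.logb 2 σ := by
            calc ∑ s : Fin n → A, HkF 0 s
                ≤ (Finset.univ : Finset (Fin n → A)).card • Real.logb 2 σ := by
                  refine Finset.sum_le_card_nsmul _ _ _ (fun s _ => ?_)
                  have := HkF_le 0 s hn hA1
                  rwa [hσ] at this
              _ = (Fintype.card (Fin n → A) : ℝ) * Real.logb 2 σ := by
                  rw [Finset.card_univ, nsmul_eq_mul]
          calc (1 / (Fintype.card (Fin n → A) : ℝ)) * (∑ s : Fin n → A, HkF 0 s)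
              ≤ (1 / (Fintype.card (Fin n → A) : ℝ)) *
                  ((Fintype.card (Fin n → A) : ℝ) * Real.logb 2 σ) :=
                mul_le_mul_of_nonneg_left hsum (by positivity)
            _ = Real.logb 2 σ := by field_simp
        refine hE.trans ?_
        have hch : (1:ℝ) ≤ (n.choose 2 : ℝ) := by
          have : 0 < n.choose 2 := Nat.choose_pos hn2
          exact_mod_cast this
        rw [pow_zero, div_one]
        exact le_mul_of_one_le_left hlogpos.le hch
      · -- k ≥ 1 : the counting argument
        have hk1 : 1 ≤ k := by omega
        by_cases hkn : n ≤ k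
        · -- no matches possible
          have hz : ∀ s : Fin n → A, HkF k s = 0 := by
            intro s
            refine HkF_eq_zero (ctxSet_card_le_one_of_no_match ?_)
            rintro ⟨i, j, hij, hm⟩
            have := hm.2.1
            omega
          rw [Finset.sum_congr rfl (fun s _ => hz s), Finset.sum_const, smul_zero, mul_zero]
          exact mul_nonneg (div_nonneg (Nat.cast_nonneg _) hpowk.le) hlogpos.le
        · have hkn' : k < n := by omega
          set P : Finset (ℕ × ℕ) := (Finset.range n ×ˢ Finset.range n).filter
            (fun p : ℕ × ℕ => p.1 < p.2 ∧ p.2 + k ≤ n) with hP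
          set M : Finset (Fin n → A) := Finset.univ.filter (HasMatch k) with hM
          have hMsub : M ⊆ P.biUnion
              (fun p => Finset.univ.filter (fun s : Fin n → A => MatchAt s k p.1 p.2)) := by
            intro s hs
            obtain ⟨i, j, hij, hm⟩ := (Finset.mem_filter.mp hs).2
            refine Finset.mem_biUnion.mpr ⟨(i, j), ?_, ?_⟩
            · rw [hP, Finset.mem_filter, Finset.mem_product, Finset.mem_range, Finset.mem_range]
              have h1 := hm.1
              have h2 := hm.2.1
              exact ⟨⟨by omega, by omega⟩, hij, h2⟩
            · exact Finset.mem_filter.mpr ⟨Finset.mem_univ _, hm⟩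
          have hMcard : M.card ≤ n.choose 2 * σ ^ (n - k) := by
            calc M.card ≤ (P.biUnion (fun p =>
                  Finset.univ.filter (fun s : Fin n → A => MatchAt s k p.1 p.2))).card :=
                  Finset.card_le_card hMsub
              _ ≤ ∑ p ∈ P, (Finset.univ.filter
                    (fun s : Fin n → A => MatchAt s k p.1 p.2)).card :=
                  Finset.card_biUnion_le
              _ ≤ ∑ _p ∈ P, σ ^ (n - k) := by
                  refine Finset.sum_le_sum (fun p hp => ?_)
                  rw [hP, Finset.mem_filter] at hp
                  exact matchAt_count hσ hp.2.1 hp.2.2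
              _ = P.card * σ ^ (n - k) := by rw [Finset.sum_const, smul_eq_mul]
              _ ≤ n.choose 2 * σ ^ (n - k) :=
                  Nat.mul_le_mul_right _ (card_pairs_le n k)
          have hsplit : ∑ s : Fin n → A, HkF k s = ∑ s ∈ M, HkF k s := by
            rw [← Finset.sum_filter_add_sum_filter_not Finset.univ (HasMatch k) (HkF k)]
            have hzero : ∑ s ∈ Finset.univ.filter (fun s : Fin n → A => ¬ HasMatch k s), HkF k s = 0 := by
              refine Finset.sum_eq_zero (fun s hs => ?_)
              exact HkF_eq_zero (ctxSet_card_le_one_of_no_match (Finset.mem_filter.mp hs).2)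
            rw [hzero, add_zero]
          have hsumM : ∑ s ∈ M, HkF k s ≤ (M.card : ℝ) * Real.logb 2 σ := by
            have h := Finset.sum_le_card_nsmul M (HkF k) (Real.logb 2 σ)
              (fun s _ => by simpa [hσ] using HkF_le k s hn hA1)
            simpa [nsmul_eq_mul] using h
          have hpow : ((σ:ℝ)) ^ (n - k) * (σ:ℝ) ^ k = (σ:ℝ) ^ n := by
            rw [← pow_add]
            congr 1
            omega
          have hcast : (Fintype.card (Fin n → A) : ℝ) = (σ:ℝ) ^ n := by
            rw [hcardfun]; push_cast; ring
          calc (1 / (Fintype.card (Fin n → A) : ℝ)) * (∑ s : Fin n → A, HkF k s)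
              = (1 / (Fintype.card (Fin n → A) : ℝ)) * (∑ s ∈ M, HkF k s) := by rw [hsplit]
            _ ≤ (1 / (Fintype.card (Fin n → A) : ℝ)) * ((M.card : ℝ) * Real.logb 2 σ) :=
                mul_le_mul_of_nonneg_left hsumM (by positivity)
            _ ≤ (1 / (Fintype.card (Fin n → A) : ℝ)) *
                (((n.choose 2 * σ ^ (n - k) : ℕ) : ℝ) * Real.logb 2 σ) := by
                refine mul_le_mul_of_nonneg_left
                  (mul_le_mul_of_nonneg_right (by exact_mod_cast hMcard) hlogpos.le)
                  (by positivity)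
            _ = ((n.choose 2 : ℝ) / (σ : ℝ) ^ k) * Real.logb 2 σ := by
                rw [hcast]
                push_cast
                field_simp
                linear_combination (n.choose 2 : ℝ) * hpow
  refine ⟨main, lt_of_le_of_lt main ?_⟩
  have hchoose : n.choose 2 < n ^ 2 := by
    have h1 : n.choose 2 ≤ n * (n - 1) := by
      rw [Nat.choose_two_right]; exact Nat.div_le_self _ _
    have h2 : n * (n - 1) < n * n := by
      exact Nat.mul_lt_mul_of_le_of_lt (le_refl n) (by omega) hn
    calc n.choose 2 ≤ n * (n - 1) := h1
      _ < n * n := h2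
      _ = n ^ 2 := (sq n).symm
  have hcR : (n.choose 2 : ℝ) < (n : ℝ) ^ 2 := by exact_mod_cast hchoose
  refine mul_lt_mul_of_pos_right ?_ hlogpos
  exact div_lt_div_of_pos_right hcR hpowk

end
end

section
/- Suppose an algorithm reads m characters and outputs a guess 'memoryless' or 'Markov'; if it answers 'memoryless' with probability at least 2/3 when the input is i.i.d. uniform over A (|A| = σ), and m²/σ^k ≤ 1/100, then there exists a fixed string s of length m with no two matching k-tuples on which the algorithm answers 'memoryless' with probability at least 2/3 − 1/100; consequently the algorithm errs with that probability on a deterministic k-th order Markov source generating s. -/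
open scoped Classical
open Finset Real Filter

noncomputable section

/-- `s` is generated by a deterministic `k`-th order Markov source: a function
`f : A^k → A` with `s(i+k) = f(s(i),…,s(i+k-1))` for all valid `i`. -/
def GenByMarkov {A : Type*} {n : ℕ} (k : ℕ) (s : Fin n → A) : Prop :=
  ∃ f : (Fin k → A) → A, ∀ i : ℕ, ∀ (hik : i + k < n),
    f (fun t => s ⟨i + (t : ℕ), by have := t.isLt; omega⟩) = s ⟨i + k, hik⟩

lemma aux_gen {A : Type*} [Nonempty A] {m k : ℕ} (s : Fin m → A) (h : ¬ HasMatch k s) :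
    GenByMarkov k s := by
  classical
  have key : ∀ i i' : ℕ, ∀ (hh1 : i + k < m) (hh2 : i' + k < m),
      (∀ t : Fin k, s ⟨i + (t : ℕ), by have := t.isLt; omega⟩ = s ⟨i' + (t : ℕ), by have := t.isLt; omega⟩) → i = i' := by
    intro i i' hi hi' ht
    by_contra hne
    rcases Nat.lt_or_ge i i' with hlt | hge
    · exact h ⟨i, i', hlt, le_of_lt (by omega), le_of_lt (by omega),
        fun t htk h1 h2 => ht ⟨t, htk⟩⟩
    · have hlt : i' < i := by omega
      exact h ⟨i', i, hlt, le_of_lt (by omega), le_of_lt (by omega),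
        fun t htk h1 h2 => (ht ⟨t, htk⟩).symm⟩
  refine ⟨fun β =>
    if hb : ∃ i : ℕ, ∃ _ : i + k < m, ∀ t : Fin k, s ⟨i + (t : ℕ), by have := t.isLt; omega⟩ = β t then
      s ⟨hb.choose + k, hb.choose_spec.choose⟩
    else Classical.arbitrary A, ?_⟩
  intro i hik
  have hb : ∃ i' : ℕ, ∃ _ : i' + k < m, ∀ t : Fin k,
      s ⟨i' + (t : ℕ), by have := t.isLt; omega⟩ = (fun t : Fin k => s ⟨i + (t : ℕ), by have := t.isLt; omega⟩) t :=
    ⟨i, hik, fun t => rfl⟩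
  beta_reduce
  rw [dif_pos hb]
  have heq : hb.choose = i :=
    key hb.choose i hb.choose_spec.choose hik hb.choose_spec.choose_spec
  exact congrArg s (Fin.ext (by simp only [Fin.val_mk]; omega))

lemma aux_count {A : Type*} [Fintype A] {σ m : ℕ} (hσ : Fintype.card A = σ)
    (k i j : ℕ) (hij : i < j) :
    (Finset.univ.filter (fun s : Fin m → A => MatchAt s k i j)).card ≤ σ ^ (m - k) := by
  classical
  rcases (Finset.univ.filter (fun s : Fin m → A => MatchAt s k i j)).eq_empty_or_nonempty
    with h | h
  · simp [h]
  · obtain ⟨s0, hs0⟩ := h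
    have hjk : j + k ≤ m := ((Finset.mem_filter.mp hs0).2).2.1
    set ι : Fin (m - k) → Fin m := fun x =>
      if _ : (x : ℕ) < j then ⟨x, by omega⟩ else ⟨(x : ℕ) + k, by have := x.isLt; omega⟩
      with hι
    have hcard : ((Finset.univ : Finset (Fin (m - k) → A))).card = σ ^ (m - k) := by
      simp [Finset.card_univ, hσ]
    rw [← hcard]
    apply Finset.card_le_card_of_injOn (fun s => s ∘ ι) (fun s _ => Finset.mem_univ _)
    intro s hs s' hs' hφ
    simp only [Finset.mem_coe, Finset.mem_filter] at hs hs'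
    have ms := hs.2
    have ms' := hs'.2
    have key : ∀ q : ℕ, ∀ hq : q < m, s ⟨q, hq⟩ = s' ⟨q, hq⟩ := by
      intro q
      induction q using Nat.strong_induction_on with
      | _ q IH =>
        intro hq
        by_cases h1 : q < j
        · have hq' : q < m - k := by omega
          have e : ι ⟨q, hq'⟩ = ⟨q, hq⟩ := by simp [hι, h1]
          have := congrFun hφ ⟨q, hq'⟩
          simpa [Function.comp, e] using this
        · by_cases h2 : j + k ≤ q
          · have hq' : q - k < m - k := by omega
            have e : ι ⟨q - k, hq'⟩ = ⟨q, hq⟩ := by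
              have : ¬ ((q - k : ℕ) < j) := by omega
              simp only [hι, dif_neg this]
              exact Fin.ext (by simp only [Fin.val_mk]; omega)
            have := congrFun hφ ⟨q - k, hq'⟩
            simpa [Function.comp, e] using this
          · -- j ≤ q < j + k
            have htk : q - j < k := by omega
            have hi1 : i + (q - j) < m := by omega
            have hj1 : j + (q - j) < m := by omega
            have e1 : s ⟨i + (q - j), hi1⟩ = s ⟨q, hq⟩ := by
              have := ms.2.2 (q - j) htk hi1 hj1
              rw [this]; exact congrArg s (Fin.ext (by simp only [Fin.val_mk]; omega))
            have e2 : s' ⟨i + (q - j), hi1⟩ = s' ⟨q, hq⟩ := by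
              have := ms'.2.2 (q - j) htk hi1 hj1
              rw [this]; exact congrArg s' (Fin.ext (by simp only [Fin.val_mk]; omega))
            rw [← e1, ← e2]
            exact IH (i + (q - j)) (by omega) hi1
    exact funext fun x => key x x.isLt


/-- If a (randomized) algorithm reading `m` characters answers "memoryless"
with probability at least `2/3` on i.i.d. uniform input, and `m²/σ^k ≤ 1/100`, then there
is a fixed string `s` of length `m` with no two matching `k`-tuples on which it answers
"memoryless" with probability at least `2/3 - 1/100`; consequently it errs with that
probability on a deterministic `k`-th order Markov source generating `s`. -/
theorem exists_bad_string_for_algorithm {A : Type*} [Fintype A] {σ m k : ℕ}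
    (hσ : Fintype.card A = σ) (hσ2 : 2 ≤ σ)
    (alg : (Fin m → A) → ℝ) (h01 : ∀ x, 0 ≤ alg x ∧ alg x ≤ 1)
    (hunif : 2 / 3 ≤ (1 / (Fintype.card (Fin m → A) : ℝ)) * ∑ x : Fin m → A, alg x)
    (hm : (m : ℝ) ^ 2 / (σ : ℝ) ^ k ≤ 1 / 100) :
    ∃ s : Fin m → A, ¬ HasMatch k s ∧ 2 / 3 - 1 / 100 ≤ alg s ∧ GenByMarkov k s := by
  classical
  have hA : Nonempty A := Fintype.card_pos_iff.mp (by omega)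
  have hσ0 : (0:ℝ) < (σ:ℝ) := by
    have : (0:ℕ) < σ := by omega
    exact_mod_cast this
  have hN : (Fintype.card (Fin m → A) : ℝ) = (σ:ℝ) ^ m := by
    rw [Fintype.card_fun, hσ, Fintype.card_fin]
    push_cast
    ring
  have hNpos : (0:ℝ) < (σ:ℝ) ^ m := by positivity
  set B : Finset (Fin m → A) := Finset.univ.filter (fun s => HasMatch k s) with hB
  set G : Finset (Fin m → A) := Finset.univ.filter (fun s => ¬ HasMatch k s) with hG
  -- Sum over matched strings is small
  have hBsum : ∑ s ∈ B, alg s ≤ (1/100) * (σ:ℝ) ^ m := by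
    have hBcard : (B.card : ℝ) ≤ (1/100) * (σ:ℝ) ^ m := by
      by_cases hkm : 1 ≤ k ∧ k ≤ m
      · obtain ⟨hk1, hkm⟩ := hkm
        have hsub : B ⊆ ((Finset.range m) ×ˢ (Finset.range m)).biUnion
            (fun p => Finset.univ.filter
              (fun s : Fin m → A => p.1 < p.2 ∧ MatchAt s k p.1 p.2)) := by
          intro s hs
          have hmatch : HasMatch k s := (Finset.mem_filter.mp hs).2
          obtain ⟨i, j, hij, hma⟩ := hmatch
          have hjm : j < m := by have := hma.2.1; omega
          exact Finset.mem_biUnion.mpr ⟨(i, j),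
            Finset.mem_product.mpr ⟨Finset.mem_range.mpr (by omega),
              Finset.mem_range.mpr hjm⟩,
            Finset.mem_filter.mpr ⟨Finset.mem_univ _, hij, hma⟩⟩
        have hcount : B.card ≤ m * m * σ ^ (m - k) := by
          calc B.card ≤ _ := Finset.card_le_card hsub
            _ ≤ ∑ p ∈ (Finset.range m) ×ˢ (Finset.range m),
                (Finset.univ.filter
                  (fun s : Fin m → A => p.1 < p.2 ∧ MatchAt s k p.1 p.2)).card :=
              Finset.card_biUnion_le
            _ ≤ ∑ _p ∈ (Finset.range m) ×ˢ (Finset.range m), σ ^ (m - k) := by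
              apply Finset.sum_le_sum
              intro p _
              by_cases hp : p.1 < p.2
              · calc (Finset.univ.filter
                    (fun s : Fin m → A => p.1 < p.2 ∧ MatchAt s k p.1 p.2)).card
                    ≤ (Finset.univ.filter
                      (fun s : Fin m → A => MatchAt s k p.1 p.2)).card := by
                      apply Finset.card_le_card
                      intro s hs
                      simp only [Finset.mem_filter] at hs ⊢
                      exact ⟨hs.1, hs.2.2⟩
                  _ ≤ σ ^ (m - k) := aux_count hσ k p.1 p.2 hp
              · have : (Finset.univ.filter
                    (fun s : Fin m → A => p.1 < p.2 ∧ MatchAt s k p.1 p.2)) = ∅ := by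
                  apply Finset.filter_false_of_mem
                  intro s _
                  exact fun hc => hp hc.1
                simp [this]
            _ = m * m * σ ^ (m - k) := by
              rw [Finset.sum_const, Finset.card_product, Finset.card_range, smul_eq_mul]
        have hstep : ((m : ℝ) * m) * (σ:ℝ) ^ (m - k) ≤ (1/100) * (σ:ℝ) ^ m := by
          have hσk : (0:ℝ) < (σ:ℝ) ^ k := by positivity
          have hm2 : (m:ℝ) ^ 2 ≤ (1/100) * (σ:ℝ) ^ k := by
            rw [div_le_iff₀ hσk] at hm
            linarith
          have hsplit : (σ:ℝ) ^ (m - k) * (σ:ℝ) ^ k = (σ:ℝ) ^ m := by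
            rw [← pow_add]
            congr 1
            omega
          have h1 : ((m:ℝ) * m) * (σ:ℝ) ^ (m - k) ≤
              ((1/100) * (σ:ℝ) ^ k) * (σ:ℝ) ^ (m - k) := by
            apply mul_le_mul_of_nonneg_right _ (by positivity)
            calc (m:ℝ) * m = (m:ℝ) ^ 2 := by ring
              _ ≤ (1/100) * (σ:ℝ) ^ k := hm2
          calc ((m : ℝ) * m) * (σ:ℝ) ^ (m - k)
              ≤ ((1/100) * (σ:ℝ) ^ k) * (σ:ℝ) ^ (m - k) := h1
            _ = (1/100) * ((σ:ℝ) ^ (m - k) * (σ:ℝ) ^ k) := by ring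
            _ = (1/100) * (σ:ℝ) ^ m := by rw [hsplit]
        calc (B.card : ℝ) ≤ ((m * m * σ ^ (m - k) : ℕ) : ℝ) := by exact_mod_cast hcount
          _ = ((m : ℝ) * m) * (σ:ℝ) ^ (m - k) := by push_cast; ring
          _ ≤ (1/100) * (σ:ℝ) ^ m := hstep
      · -- k = 0 or k > m : B is empty
        have hBempty : B = ∅ := by
          rw [hB]
          apply Finset.filter_false_of_mem
          intro s _
          rintro ⟨i, j, hij, hma⟩
          rcases not_and_or.mp hkm with hk0 | hkm'
          · -- k = 0, so m^2 ≤ σ^k/100 = 1/100 forces m = 0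
            have hk0 : k = 0 := by omega
            have hm0 : m = 0 := by
              by_contra hm0
              have hm1 : (1:ℝ) ≤ (m:ℝ) := by
                have : 1 ≤ m := by omega
                exact_mod_cast this
              rw [hk0] at hm
              simp only [pow_zero, div_one] at hm
              nlinarith
            have := hma.2.1
            omega
          · have := hma.2.1
            omega
        simp only [hBempty, Finset.card_empty, Nat.cast_zero]
        positivity
    calc ∑ s ∈ B, alg s ≤ ∑ _s ∈ B, (1:ℝ) :=
        Finset.sum_le_sum (fun s _ => (h01 s).2)
      _ = B.card := by simp
      _ ≤ (1/100) * (σ:ℝ) ^ m := hBcard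
  -- Sum over unmatched strings is large
  have hsplitsum : ∑ s ∈ G, alg s + ∑ s ∈ B, alg s = ∑ s : Fin m → A, alg s := by
    rw [hG, hB]
    exact Finset.sum_filter_not_add_sum_filter _ _ _
  have htotal : (2/3) * (σ:ℝ) ^ m ≤ ∑ s : Fin m → A, alg s := by
    rw [hN] at hunif
    rw [one_div, inv_mul_eq_div, le_div_iff₀ hNpos] at hunif
    linarith
  have hGsum : (2/3 - 1/100) * (σ:ℝ) ^ m ≤ ∑ s ∈ G, alg s := by
    have := hsplitsum
    nlinarith
  -- G has an element with large alg value
  have hGcard : (G.card : ℝ) ≤ (σ:ℝ) ^ m := by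
    rw [← hN]
    exact_mod_cast Finset.card_le_univ G
  have hGne : G.Nonempty := by
    rw [← Finset.card_pos]
    by_contra hc
    have : G.card = 0 := by omega
    have hz : ∑ s ∈ G, alg s = 0 := by
      rw [Finset.card_eq_zero.mp this, Finset.sum_empty]
    rw [hz] at hGsum
    nlinarith
  have hexists : ∃ s ∈ G, 2/3 - 1/100 ≤ alg s := by
    by_contra hc
    push_neg at hc
    have hlt : ∑ s ∈ G, alg s < ∑ _s ∈ G, (2/3 - 1/100 : ℝ) :=
      Finset.sum_lt_sum_of_nonempty hGne (fun s hs => hc s hs)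
    rw [Finset.sum_const, nsmul_eq_mul] at hlt
    have : (G.card : ℝ) * (2/3 - 1/100) ≤ (σ:ℝ) ^ m * (2/3 - 1/100) := by
      apply mul_le_mul_of_nonneg_right hGcard
      norm_num
    nlinarith
  obtain ⟨s, hsG, hsval⟩ := hexists
  have hnomatch : ¬ HasMatch k s := (Finset.mem_filter.mp hsG).2
  exact ⟨s, hnomatch, hsval, aux_gen s hnomatch⟩

end
end
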